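/- Let λ : ℕ≥1 → ℝ satisfy the Hecke relations together with Deligne's bound |λ(p)| ≤ 2 at every prime p, and let x ≥ 2 be a real number such that λ(n) ≥ 0 for every integer 1 ≤ n ≤ x. Then Σ_{n ≤ x} λ(n) ≥ Σ_{n ≤ x} h_x(n). -/

import Mathlib

open Finset

/-- `λ` satisfies the Hecke relations: `λ(1) = 1` and
`λ(m)λ(n) = ∑_{d | gcd(m,n)} λ(mn/d²)` for all positive integers `m, n`. -/
def HeckeRelations (lam : ℕ → ℝ) : Prop :=
  lam 1 = 1 ∧
    ∀ m n : ℕ, 0 < m → 0 < n →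
      lam m * lam n = ∑ d ∈ (Nat.gcd m n).divisors, lam (m * n / d ^ 2)

lemma hecke_mul {lam : ℕ → ℝ} (h : HeckeRelations lam) {m n : ℕ} (hm : 0 < m) (hn : 0 < n)
    (hc : Nat.Coprime m n) : lam (m * n) = lam m * lam n := by
  rw [h.2 m n hm hn, hc, Nat.divisors_one, Finset.sum_singleton]
  norm_num

lemma hecke_prod {lam : ℕ → ℝ} (h : HeckeRelations lam) {s : Finset ℕ}
    (hs : ∀ p ∈ s, Nat.Prime p) : lam (∏ p ∈ s, p) = ∏ p ∈ s, lam p := by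
  induction s using Finset.induction with
  | empty => simpa using h.1
  | @insert a s ha ih =>
    have hap : Nat.Prime a := hs a (Finset.mem_insert_self a s)
    have hsp : ∀ p ∈ s, Nat.Prime p := fun p hp => hs p (Finset.mem_insert_of_mem hp)
    have hc : Nat.Coprime a (∏ p ∈ s, p) := by
      apply Nat.Coprime.prod_right
      intro p hp
      exact (Nat.coprime_primes hap (hsp p hp)).mpr (by rintro rfl; exact ha hp)
    rw [Finset.prod_insert ha, Finset.prod_insert ha, ← ih hsp,
      hecke_mul h hap.pos (Finset.prod_pos fun p hp => (hsp p hp).pos) hc]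

lemma hecke_pp {lam : ℕ → ℝ} (h : HeckeRelations lam) {p : ℕ} (hp : Nat.Prime p) (k : ℕ) :
    lam p * lam (p ^ (k+1)) = lam (p ^ (k+2)) + lam (p ^ k) := by
  have hg : Nat.gcd p (p ^ (k+1)) = p := Nat.gcd_eq_left (dvd_pow_self p (Nat.succ_ne_zero k))
  rw [h.2 p (p^(k+1)) hp.pos (pow_pos hp.pos _), hg, hp.divisors,
    Finset.sum_pair hp.one_lt.ne]
  have h1 : p * p ^ (k+1) / 1 ^ 2 = p ^ (k+2) := by ring_nf; simp
  have h2 : p * p ^ (k+1) / p ^ 2 = p ^ k := by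
    rw [← pow_succ', Nat.pow_div (by omega) hp.pos]
    congr 1
  rw [h1, h2]

lemma cheb {lam : ℕ → ℝ} (h : HeckeRelations lam) {p : ℕ} (hp : Nat.Prime p)
    {θ : ℝ} (hθ : lam p = 2 * Real.cos θ) :
    ∀ k : ℕ, lam (p ^ k) * Real.sin θ = Real.sin (((k : ℝ) + 1) * θ) := by
  have key : ∀ k : ℕ, lam (p^k) * Real.sin θ = Real.sin (((k:ℝ)+1)*θ) ∧
      lam (p^(k+1)) * Real.sin θ = Real.sin (((k:ℝ)+2)*θ) := by
    intro k
    induction k with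
    | zero =>
      constructor
      · simp [h.1]
      · rw [pow_one, hθ]
        norm_num [Real.sin_two_mul]
        ring
    | succ k ih =>
      constructor
      · have := ih.2; push_cast at this ⊢; convert this using 3; ring
      · have hr := hecke_pp h hp k
        have hl : lam (p^(k+2)) = lam p * lam (p^(k+1)) - lam (p^k) := by linarith
        have : lam (p^(k+1+1)) = lam p * lam (p^(k+1)) - lam (p^k) := by
          convert hl using 3
        rw [this, sub_mul, hθ, mul_assoc, ih.2, ih.1]
        push_cast
        have e1 : ((k:ℝ)+1+2)*θ = ((k+2)*θ + θ) := by ring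
        have e2 : ((k:ℝ)+1)*θ = ((k+2)*θ - θ) := by ring
        rw [e1, e2, Real.sin_add, Real.sin_sub]
        ring
  exact fun k => (key k).1

lemma angle_le {θ : ℝ} (h0 : 0 < θ) (hπ : θ < Real.pi) (m : ℕ)
    (hs : ∀ k ≤ m, 0 ≤ Real.sin (((k:ℝ) + 1) * θ)) : θ ≤ Real.pi / (m + 1) := by
  by_contra hc
  push_neg at hc
  have hm1 : (0:ℝ) < (m:ℝ) + 1 := by positivity
  have hex : ∃ j : ℕ, Real.pi < ((j:ℝ) + 1) * θ :=
    ⟨m, by have := (div_lt_iff₀ hm1).mp hc; linarith⟩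
  classical
  set j := Nat.find hex with hjdef
  have hj : Real.pi < ((j:ℝ)+1) * θ := Nat.find_spec hex
  have hjm : j ≤ m := Nat.find_min' hex (by have := (div_lt_iff₀ hm1).mp hc; linarith)
  have hj0 : j ≠ 0 := by
    intro hz
    rw [hz] at hj; push_cast at hj; linarith
  obtain ⟨i, hi⟩ : ∃ i, j = i + 1 := ⟨j - 1, by omega⟩
  have hprev : ¬ Real.pi < ((i:ℝ)+1)*θ := Nat.find_min hex (by omega)
  push_neg at hprev
  have hy2 : ((j:ℝ)+1)*θ < 2*Real.pi := by
    have : ((j:ℝ)) * θ ≤ Real.pi := by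
      have : ((j:ℝ)) = (i:ℝ) + 1 := by rw [hi]; push_cast; ring
      rw [this]; exact hprev
    nlinarith
  have hy0 : 0 < Real.sin (((j:ℝ)+1)*θ - Real.pi) :=
    Real.sin_pos_of_pos_of_lt_pi (by linarith) (by linarith)
  have hneg : Real.sin (((j:ℝ)+1)*θ) < 0 := by
    have := Real.sin_sub_pi (((j:ℝ)+1)*θ)
    linarith
  exact absurd (hs j hjm) (not_le.mpr hneg)

lemma prime_bound {lam : ℕ → ℝ} (h : HeckeRelations lam)
    (hD : ∀ p : ℕ, p.Prime → |lam p| ≤ 2) {p : ℕ} (hp : Nat.Prime p) {x : ℝ}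
    (hx2 : 2 ≤ x) (hpx : (p:ℝ) ≤ x)
    (hpos : ∀ n : ℕ, 1 ≤ n → (n:ℝ) ≤ x → 0 ≤ lam n) :
    2 * Real.cos (Real.pi / (⌊Real.log x / Real.log p⌋₊ + 1)) ≤ lam p := by
  have hp2 : (2:ℝ) ≤ (p:ℝ) := by exact_mod_cast hp.two_le
  have hlogp : 0 < Real.log p := Real.log_pos (by linarith)
  have hlogx : 0 < Real.log x := Real.log_pos (by linarith)
  set m := ⌊Real.log x / Real.log p⌋₊ with hm
  have hmr : (m:ℝ) ≤ Real.log x / Real.log p := Nat.floor_le (by positivity)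
  have hpk : ∀ k : ℕ, k ≤ m → ((p:ℝ))^k ≤ x := by
    intro k hk
    have h1 : (k:ℝ) ≤ Real.log x / Real.log p := le_trans (by exact_mod_cast hk) hmr
    have h2 : (k:ℝ) * Real.log p ≤ Real.log x := by
      rw [div_eq_mul_inv] at h1
      calc (k:ℝ) * Real.log p ≤ (Real.log x * (Real.log p)⁻¹) * Real.log p := by
            apply mul_le_mul_of_nonneg_right h1 hlogp.le
        _ = Real.log x := by field_simp
    have h3 : Real.log ((p:ℝ)^k) ≤ Real.log x := by rw [Real.log_pow]; exact h2
    calc ((p:ℝ))^k = Real.exp (Real.log ((p:ℝ)^k)) := (Real.exp_log (by positivity)).symm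
      _ ≤ Real.exp (Real.log x) := Real.exp_le_exp.mpr h3
      _ = x := Real.exp_log (by linarith)
  have hlamk : ∀ k : ℕ, k ≤ m → 0 ≤ lam (p^k) := by
    intro k hk
    apply hpos _ (Nat.one_le_pow _ _ hp.pos)
    push_cast
    exact hpk k hk
  have habs := hD p hp
  have h1 : -1 ≤ lam p / 2 := by rw [abs_le] at habs; linarith
  have h2 : lam p / 2 ≤ 1 := by rw [abs_le] at habs; linarith
  set θ := Real.arccos (lam p / 2) with hθdef
  have hcos : Real.cos θ = lam p / 2 := Real.cos_arccos h1 h2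
  have hθeq : lam p = 2 * Real.cos θ := by rw [hcos]; ring
  have hθ0 : 0 ≤ θ := Real.arccos_nonneg _
  have hθπ : θ ≤ Real.pi := Real.arccos_le_pi _
  have hm1 : 1 ≤ m := by
    apply Nat.le_floor
    rw [le_div_iff₀ hlogp]
    push_cast
    have := Real.log_le_log (by positivity : (0:ℝ) < (p:ℝ)) hpx
    linarith
  have hθltπ : θ < Real.pi := by
    rcases lt_or_eq_of_le hθπ with h' | h'
    · exact h'
    · exfalso
      have : lam p = -2 := by rw [hθeq, h', Real.cos_pi]; ring
      have h0 := hpos p hp.one_le hpx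
      linarith
  rcases eq_or_lt_of_le hθ0 with h0 | h0
  · -- θ = 0, lam p = 2
    have : lam p = 2 := by rw [hθeq, ← h0, Real.cos_zero]; ring
    rw [this]
    have := Real.cos_le_one (Real.pi / (m + 1))
    linarith
  · have hsin : 0 < Real.sin θ := Real.sin_pos_of_pos_of_lt_pi h0 hθltπ
    have hang : θ ≤ Real.pi / (m + 1) := by
      apply angle_le h0 hθltπ
      intro k hk
      rw [← cheb h hp hθeq k]
      exact mul_nonneg (hlamk k hk) hsin.le
    have hcos2 : Real.cos (Real.pi / (m+1)) ≤ Real.cos θ := by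
      apply Real.cos_le_cos_of_nonneg_of_le_pi hθ0 _ hang
      apply div_le_self Real.pi_pos.le
      have : (1:ℝ) ≤ (m:ℝ) := by exact_mod_cast hm1
      linarith
    rw [hθeq]
    linarith

/-- `α(0) = 2` and `α(t) = 2 cos(π/(m+1))` for `1/(m+1) < t ≤ 1/m`, `m ∈ ℕ≥1`.
For `0 < t ≤ 1` one has `1/(m+1) < t ≤ 1/m` exactly when `⌊1/t⌋ = m`. -/
noncomputable def alphaFn (t : ℝ) : ℝ :=
  if t ≤ 0 then 2 else 2 * Real.cos (Real.pi / (⌊1 / t⌋₊ + 1))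

/-- The multiplicative function `h_x`, supported on squarefree integers, with
`h_x(p) = α(log p / log x)` for primes `p ≤ x` and `h_x(p) = 0` for primes `p > x`. -/
noncomputable def hx (x : ℝ) (n : ℕ) : ℝ :=
  if Squarefree n then
    ∏ p ∈ n.primeFactors,
      (if (p : ℝ) ≤ x then alphaFn (Real.log p / Real.log x) else 0)
  else 0

theorem stmt_1 (lam : ℕ → ℝ) (hHecke : HeckeRelations lam)
    (hDeligne : ∀ p : ℕ, p.Prime → |lam p| ≤ 2)
    (x : ℝ) (hx2 : 2 ≤ x)
    (hpos : ∀ n : ℕ, 1 ≤ n → (n : ℝ) ≤ x → 0 ≤ lam n) :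
    ∑ n ∈ Finset.Icc 1 ⌊x⌋₊, hx x n ≤ ∑ n ∈ Finset.Icc 1 ⌊x⌋₊, lam n := by
  apply Finset.sum_le_sum
  intro n hn
  rw [Finset.mem_Icc] at hn
  have hn1 : 1 ≤ n := hn.1
  have hnx : (n:ℝ) ≤ x := by
    calc (n:ℝ) ≤ (⌊x⌋₊ : ℝ) := by exact_mod_cast hn.2
      _ ≤ x := Nat.floor_le (by linarith)
  unfold hx
  split_ifs with hsq
  · -- squarefree
    have hpfp : ∀ p ∈ n.primeFactors, Nat.Prime p := fun p hp => Nat.prime_of_mem_primeFactors hp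
    have hlameq : lam n = ∏ p ∈ n.primeFactors, lam p := by
      conv_lhs => rw [← Nat.prod_primeFactors_of_squarefree hsq]
      exact hecke_prod hHecke hpfp
    rw [hlameq]
    apply Finset.prod_le_prod
    · intro p hp
      have hpp := hpfp p hp
      have hple : (p:ℝ) ≤ x := by
        have hdvd := Nat.dvd_of_mem_primeFactors hp
        have : p ≤ n := Nat.le_of_dvd (by omega) hdvd
        calc (p:ℝ) ≤ (n:ℝ) := by exact_mod_cast this
          _ ≤ x := hnx
      rw [if_pos hple]
      have hp2 : (2:ℝ) ≤ (p:ℝ) := by exact_mod_cast hpp.two_le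
      have hlogp : 0 < Real.log p := Real.log_pos (by linarith)
      have hlogx : 0 < Real.log x := Real.log_pos (by linarith)
      have ht : ¬ (Real.log p / Real.log x ≤ 0) := not_le.mpr (by positivity)
      rw [alphaFn, if_neg ht, one_div_div]
      -- 0 ≤ 2 cos (π / (m+1)) with m = ⌊log x / log p⌋₊ ≥ 1
      have hm1 : 1 ≤ ⌊Real.log x / Real.log p⌋₊ := by
        apply Nat.le_floor
        rw [le_div_iff₀ hlogp]
        push_cast
        have := Real.log_le_log (by positivity : (0:ℝ) < (p:ℝ)) hple
        linarith
      have hcosnn : 0 ≤ Real.cos (Real.pi / (⌊Real.log x / Real.log p⌋₊ + 1)) := by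
        apply Real.cos_nonneg_of_mem_Icc
        constructor
        · have : 0 ≤ Real.pi / (⌊Real.log x / Real.log p⌋₊ + 1) := by positivity
          linarith [Real.pi_pos]
        · rw [div_le_div_iff₀ (by positivity) (by norm_num)]
          have : (1:ℝ) ≤ (⌊Real.log x / Real.log p⌋₊ : ℝ) := by exact_mod_cast hm1
          nlinarith [Real.pi_pos]
      linarith
    · intro p hp
      have hpp := hpfp p hp
      have hple : (p:ℝ) ≤ x := by
        have hdvd := Nat.dvd_of_mem_primeFactors hp
        have : p ≤ n := Nat.le_of_dvd (by omega) hdvd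
        calc (p:ℝ) ≤ (n:ℝ) := by exact_mod_cast this
          _ ≤ x := hnx
      rw [if_pos hple]
      have hp2 : (2:ℝ) ≤ (p:ℝ) := by exact_mod_cast hpp.two_le
      have hlogp : 0 < Real.log p := Real.log_pos (by linarith)
      have hlogx : 0 < Real.log x := Real.log_pos (by linarith)
      have ht : ¬ (Real.log p / Real.log x ≤ 0) := not_le.mpr (by positivity)
      rw [alphaFn, if_neg ht, one_div_div]
      exact prime_bound hHecke hDeligne hpp hx2 hple hpos
  · -- not squarefree
    exact hpos n hn1 hnx
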